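/- For every connected graph G on n ≥ 2 vertices, md(G) = n − 1 if and only if G is a tree. -/

import Mathlib

open SimpleGraph

variable {V : Type*}

/-- Color `i` separates `u` and `v`: there is an edge-cut, all of whose edges
have color `i`, whose removal disconnects `u` from `v`. -/
def separatesColor (G : SimpleGraph V) (Γ : Sym2 V → ℕ) (i : ℕ) (u v : V) : Prop :=
  ∃ F : Set (Sym2 V), F ⊆ G.edgeSet ∧ (∀ e ∈ F, Γ e = i) ∧
    ¬ ((G.deleteEdges F).Reachable u v)

/-- An MD-coloring: every pair of distinct vertices is separated by a
monochromatic edge-cut. -/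
def IsMDColoring (G : SimpleGraph V) (Γ : Sym2 V → ℕ) : Prop :=
  ∀ u v : V, u ≠ v → ∃ i, separatesColor G Γ i u v

/-- The monochromatic disconnection number: the maximum number of colors
used by an MD-coloring. -/
noncomputable def mdNumber (G : SimpleGraph V) : ℕ :=
  sSup {k | ∃ Γ : Sym2 V → ℕ, IsMDColoring G Γ ∧ (Γ '' G.edgeSet).ncard = k}

/-! ### Auxiliary lemmas -/

section Aux

variable {G : SimpleGraph V}

lemma deleteEdges_le_deleteEdges {s t : Set (Sym2 V)} (h : s ⊆ t) :
    G.deleteEdges t ≤ G.deleteEdges s := by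
  intro a b hab
  rw [deleteEdges_adj] at hab ⊢
  exact ⟨hab.1, fun hm => hab.2 (h hm)⟩

/-- In an MD-coloring, for any edge `uv`, deleting all edges of the color of `uv`
disconnects `u` from `v`. -/
lemma forcing {Γ : Sym2 V → ℕ} (hΓ : IsMDColoring G Γ) {u v : V} (h : G.Adj u v) :
    ¬ (G.deleteEdges {e | Γ e = Γ s(u, v)}).Reachable u v := by
  obtain ⟨i, F, hFE, hFc, hFr⟩ := hΓ u v h.ne
  have heF : s(u, v) ∈ F := by
    by_contra he
    exact hFr ⟨Walk.cons (by rw [deleteEdges_adj]; exact ⟨h, he⟩) Walk.nil⟩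
  have hi : Γ s(u, v) = i := hFc _ heF
  intro hr
  refine hFr (hr.mono (deleteEdges_le_deleteEdges ?_))
  intro e he
  rw [Set.mem_setOf_eq, hi]
  exact hFc e he

/-- Splitting a duplicate-free walk at an edge. -/
lemma split_reach {H : SimpleGraph V} {a b : V} (w : H.Walk a b) (hw : w.edges.Nodup)
    {x y : V} (hxy : s(x, y) ∈ w.edges) :
    ((H.deleteEdges {s(x, y)}).Reachable a x ∧ (H.deleteEdges {s(x, y)}).Reachable y b) ∨
    ((H.deleteEdges {s(x, y)}).Reachable a y ∧ (H.deleteEdges {s(x, y)}).Reachable x b) := by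
  induction w with
  | nil => simp at hxy
  | @cons a c b adj rest ih =>
    rw [Walk.edges_cons, List.nodup_cons] at hw
    rw [Walk.edges_cons] at hxy
    rcases List.mem_cons.mp hxy with h1 | h2
    · -- the edge is the first edge of the walk
      have hrest : (H.deleteEdges {s(x, y)}).Reachable c b := by
        refine ⟨rest.toDeleteEdges _ fun e he hes => ?_⟩
        rw [Set.mem_singleton_iff] at hes
        rw [hes] at he
        rw [h1] at he
        exact hw.1 he
      rcases Sym2.eq_iff.mp h1 with ⟨hx, hy⟩ | ⟨hy, hx⟩
      · subst hx; subst hy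
        exact Or.inl ⟨Reachable.refl _, hrest⟩
      · subst hx; subst hy
        exact Or.inr ⟨Reachable.refl _, hrest⟩
    · -- the edge is in the rest of the walk
      have hne : s(a, c) ≠ s(x, y) := fun hEq => hw.1 (hEq ▸ h2)
      have hstep : (H.deleteEdges {s(x, y)}).Reachable a c :=
        (by rw [deleteEdges_adj]; exact ⟨adj, by simpa using hne⟩ :
          (H.deleteEdges {s(x, y)}).Adj a c).reachable
      rcases ih hw.2 h2 with ⟨hh1, hh2⟩ | ⟨hh1, hh2⟩
      · exact Or.inl ⟨hstep.trans hh1, hh2⟩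
      · exact Or.inr ⟨hstep.trans hh1, hh2⟩

/-- Deleting an edge of the unique path between `u` and `v` in a tree
disconnects `u` from `v`. -/
lemma tree_not_reach (hT : G.IsTree) {u v : V} {p : G.Walk u v}
    (hp : p.IsPath) {t : Sym2 V} (ht : t ∈ p.edges) :
    ¬ (G.deleteEdges {t}).Reachable u v := by
  classical
  rintro ⟨w⟩
  have hsub : ∀ e ∈ w.edges, e ∈ G.edgeSet \ {t} := fun e he => by
    rw [← edgeSet_deleteEdges]
    exact w.edges_subset_edgeSet he
  let q : G.Path u v := (w.transfer G fun e he => (hsub e he).1).toPath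
  have hq : t ∉ (q : G.Walk u v).edges := fun hq' => by
    have h2 := Walk.edges_toPath_subset (w.transfer G fun e he => (hsub e he).1) hq'
    rw [Walk.edges_transfer] at h2
    exact (hsub t h2).2 rfl
  have hqp : (q : G.Walk u v) = p := (hT.existsUnique_path u v).unique q.2 hp
  rw [hqp] at hq
  exact hq ht

/-- Reachability is preserved after deleting a "non-bridge" edge. -/
lemma reach_patch {a b : V}
    (h : (G.deleteEdges {s(a, b)}).Reachable a b) :
    ∀ {x y : V}, G.Reachable x y → (G.deleteEdges {s(a, b)}).Reachable x y := by
  intro x y hxy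
  obtain ⟨w⟩ := hxy
  induction w with
  | nil => exact Reachable.refl _
  | @cons x c y adj rest ih =>
    refine Reachable.trans ?_ ih
    by_cases he : s(x, c) = s(a, b)
    · rcases Sym2.eq_iff.mp he with ⟨h1, h2⟩ | ⟨h1, h2⟩
      · subst h1; subst h2; exact h
      · subst h1; subst h2; exact h.symm
    · exact (by rw [deleteEdges_adj]; exact ⟨adj, by simpa using he⟩ :
        (G.deleteEdges {s(a, b)}).Adj x c).reachable

/-- Every connected graph on a finite vertex type has a spanning tree. -/
lemma exists_spanning_tree [Fintype V] :
    ∀ (n : ℕ) (G : SimpleGraph V), G.edgeSet.ncard ≤ n → G.Connected →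
      ∃ T, T ≤ G ∧ T.IsTree := by
  intro n
  induction n with
  | zero =>
    intro G hc hG
    refine ⟨G, le_refl _, hG, ?_⟩
    have hfin : G.edgeSet.Finite := Set.toFinite _
    have hempty : G.edgeSet = ∅ := by
      rw [← Set.ncard_eq_zero hfin]
      omega
    intro v c hc'
    cases c with
    | nil => exact hc'.ne_nil rfl
    | cons adj rest =>
      have : s(v, _) ∈ G.edgeSet := adj
      rw [hempty] at this
      exact this.elim
  | succ n ih =>
    intro G hc hG
    by_cases hA : G.IsAcyclic
    · exact ⟨G, le_refl _, hG, hA⟩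
    · rw [isAcyclic_iff_forall_adj_isBridge] at hA
      push_neg at hA
      obtain ⟨a, b, hadj, hnb⟩ := hA
      rw [isBridge_iff] at hnb
      push_neg at hnb
      have hreach : (G.deleteEdges {s(a, b)}).Reachable a b := hnb
      have hG' : (G.deleteEdges {s(a, b)}).Connected := by
        haveI : Nonempty V := hG.nonempty
        exact Connected.mk (fun x y => reach_patch hreach (hG.preconnected x y))
      have hcard : (G.deleteEdges {s(a, b)}).edgeSet.ncard ≤ n := by
        rw [edgeSet_deleteEdges]
        have hmem : s(a, b) ∈ G.edgeSet := hadj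
        have hfin : G.edgeSet.Finite := Set.toFinite _
        have := Set.ncard_diff_singleton_of_mem hmem
        have hpos : 1 ≤ G.edgeSet.ncard := by
          rw [Nat.one_le_iff_ne_zero, Ne, Set.ncard_eq_zero hfin]
          intro hE
          rw [Set.eq_empty_iff_forall_notMem] at hE
          exact hE _ hmem
        omega
      obtain ⟨T, hTle, hTt⟩ := ih _ hcard hG'
      exact ⟨T, hTle.trans (deleteEdges_le _), hTt⟩

lemma tree_edge_ncard [Fintype V] {T : SimpleGraph V} (hT : T.IsTree) :
    T.edgeSet.ncard = Fintype.card V - 1 := by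
  classical
  rw [Set.ncard_eq_toFinset_card']
  have h := hT.card_edgeFinset
  rw [show T.edgeFinset = T.edgeSet.toFinset from rfl] at h
  omega

/-- In an MD-coloring, every used color appears on an edge of any connected
spanning subgraph. -/
lemma color_meets_tree {T : SimpleGraph V} (hle : T ≤ G) (hTc : T.Connected)
    {Γ : Sym2 V → ℕ} (hΓ : IsMDColoring G Γ) {i : ℕ} (hi : i ∈ Γ '' G.edgeSet) :
    ∃ t ∈ T.edgeSet, Γ t = i := by
  obtain ⟨e, heE, hec⟩ := hi
  induction e using Sym2.ind with
  | _ u v =>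
    rw [mem_edgeSet] at heE
    by_contra hno
    push_neg at hno
    have hTle : T ≤ G.deleteEdges {e | Γ e = i} := by
      intro x y hxy
      rw [deleteEdges_adj]
      exact ⟨hle hxy, fun hmem => hno _ hxy hmem⟩
    have : (G.deleteEdges {e | Γ e = i}).Reachable u v :=
      (hTc.preconnected u v).mono hTle
    rw [← hec] at this
    exact forcing hΓ heE this

/-- The number of colors in an MD-coloring is at most `n - 1`. -/
lemma md_upper [Fintype V] (hG : G.Connected) {Γ : Sym2 V → ℕ}
    (hΓ : IsMDColoring G Γ) : (Γ '' G.edgeSet).ncard ≤ Fintype.card V - 1 := by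
  obtain ⟨T, hle, hTt⟩ := exists_spanning_tree G.edgeSet.ncard G le_rfl hG
  have hmeet := fun i hi => color_meets_tree hle hTt.isConnected hΓ (i := i) hi
  choose f hf1 hf2 using hmeet
  classical
  haveI : Nonempty V := hG.nonempty
  let g : ℕ → Sym2 V := fun i => if h : i ∈ Γ '' G.edgeSet then f i h else s(Classical.arbitrary V, Classical.arbitrary V)
  have hcard : (Γ '' G.edgeSet).ncard ≤ T.edgeSet.ncard := by
    refine Set.ncard_le_ncard_of_injOn g (fun i hi => ?_) (fun i hi j hj hij => ?_)
      (Set.toFinite _)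
    · simp only [g, dif_pos hi]; exact hf1 i hi
    · have h1 : Γ (g i) = i := by simp only [g, dif_pos hi]; exact hf2 i hi
      have h2 : Γ (g j) = j := by simp only [g, dif_pos hj]; exact hf2 j hj
      rw [← h1, ← h2, hij]
  rw [tree_edge_ncard hTt] at hcard
  exact hcard

end Aux

/-- A connected graph on `n ≥ 2` vertices satisfies `md(G) = n - 1` iff `G`
is a tree. -/
theorem stmt_4 [Fintype V] (G : SimpleGraph V) (hG : G.Connected)
    (hn : 2 ≤ Fintype.card V) :
    mdNumber G = Fintype.card V - 1 ↔ G.IsTree := by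
  classical
  set S : Set ℕ := {k | ∃ Γ : Sym2 V → ℕ, IsMDColoring G Γ ∧ (Γ '' G.edgeSet).ncard = k}
    with hS
  have hub : ∀ k ∈ S, k ≤ Fintype.card V - 1 := by
    rintro k ⟨Γ, hΓ, rfl⟩
    exact md_upper hG hΓ
  have hbdd : BddAbove S := ⟨Fintype.card V - 1, hub⟩
  -- the edge set is nonempty
  have hEne : G.edgeSet.Nonempty := by
    rw [Set.nonempty_iff_ne_empty, Ne, edgeSet_eq_empty]
    intro hbot
    obtain ⟨u, v, huv⟩ := Fintype.exists_pair_of_one_lt_card (α := V) (by omega)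
    exact huv (reachable_bot.mp (hbot ▸ hG.preconnected u v))
  -- S is nonempty via the constant coloring
  have hSne : S.Nonempty := by
    refine ⟨1, fun _ => 0, ?_, ?_⟩
    · intro u v huv
      refine ⟨0, G.edgeSet, le_rfl, fun _ _ => rfl, ?_⟩
      have : G.deleteEdges G.edgeSet = ⊥ := by
        ext a b
        simp only [deleteEdges_adj, bot_adj, iff_false, not_and, not_not]
        exact fun h => h
      rw [this, reachable_bot]
      exact huv
    · rw [Set.Nonempty.image_const hEne, Set.ncard_singleton]
  have hmd : mdNumber G = sSup S := rfl
  constructor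
  · -- md = n - 1 → tree
    intro hmdeq
    have hmem : Fintype.card V - 1 ∈ S := by
      rw [← hmdeq, hmd]
      exact Nat.sSup_mem hSne hbdd
    obtain ⟨Γ, hΓ, hcard⟩ := hmem
    haveI : Nonempty V := hG.nonempty
    obtain ⟨T, hle, hTt⟩ := exists_spanning_tree G.edgeSet.ncard G le_rfl hG
    -- the color-to-tree-edge map
    have hmeet := fun i hi => color_meets_tree hle hTt.isConnected hΓ (i := i) hi
    choose f hf1 hf2 using hmeet
    let g : ℕ → Sym2 V := fun i =>
      if h : i ∈ Γ '' G.edgeSet then f i h else s(Classical.arbitrary V, Classical.arbitrary V)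
    have hg1 : ∀ i ∈ Γ '' G.edgeSet, g i ∈ T.edgeSet := by
      intro i hi; simp only [g, dif_pos hi]; exact hf1 i hi
    have hg2 : ∀ i ∈ Γ '' G.edgeSet, Γ (g i) = i := by
      intro i hi; simp only [g, dif_pos hi]; exact hf2 i hi
    have hginj : Set.InjOn g (Γ '' G.edgeSet) := by
      intro i hi j hj hij
      rw [← hg2 i hi, ← hg2 j hj, hij]
    -- the map is onto the tree edges
    have himg : g '' (Γ '' G.edgeSet) = T.edgeSet := by
      refine Set.eq_of_subset_of_ncard_le ?_ ?_ (Set.toFinite _)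
      · rintro t ⟨i, hi, rfl⟩; exact hg1 i hi
      · rw [Set.ncard_image_of_injOn hginj, hcard, tree_edge_ncard hTt]
    -- Γ is injective on tree edges
    have hTsub : T.edgeSet ⊆ G.edgeSet := edgeSet_subset_edgeSet.mpr hle
    have hinj : Set.InjOn Γ T.edgeSet := by
      intro t1 ht1 t2 ht2 hEq
      have h1 : t1 ∈ g '' (Γ '' G.edgeSet) := himg ▸ ht1
      have h2 : t2 ∈ g '' (Γ '' G.edgeSet) := himg ▸ ht2
      obtain ⟨i, hi, rfl⟩ := h1
      obtain ⟨j, hj, rfl⟩ := h2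
      rw [hg2 i hi, hg2 j hj] at hEq
      rw [hEq]
    -- suppose G is not a tree; find an edge outside T
    by_cases hsub : G.edgeSet ⊆ T.edgeSet
    · have : T = G := edgeSet_inj.mp (Set.Subset.antisymm hTsub hsub)
      rwa [← this]
    · exfalso
      rw [Set.not_subset] at hsub
      obtain ⟨e, heG, heT⟩ := hsub
      induction e using Sym2.ind with
      | _ u v =>
        rw [mem_edgeSet] at heG
        have huv : u ≠ v := heG.ne
        -- key contradiction derivation for a path edge of a different color
        obtain ⟨p, hp⟩ := (hTt.existsUnique_path u v).exists
        have hkey : ∀ x y : V, s(x, y) ∈ p.edges → Γ s(x, y) ≠ Γ s(u, v) → False := by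
          intro x y ht' hne
          have hT' : s(x, y) ∈ T.edgeSet := p.edges_subset_edgeSet ht'
          rw [mem_edgeSet] at hT'
          have hadj' : G.Adj x y := hle hT'
          have key2 := forcing hΓ hadj'
          have hDle : T.deleteEdges {s(x, y)} ≤ G.deleteEdges {e | Γ e = Γ s(x, y)} := by
            intro c d hcd
            rw [deleteEdges_adj] at hcd ⊢
            refine ⟨hle hcd.1, fun hmem => ?_⟩
            have hcdT : s(c, d) ∈ T.edgeSet := (mem_edgeSet T).mpr hcd.1
            have : s(c, d) = s(x, y) := hinj hcdT ((mem_edgeSet T).mpr hT') hmem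
            exact hcd.2 (by rw [this]; rfl)
          have huvadj : (G.deleteEdges {e | Γ e = Γ s(x, y)}).Adj u v := by
            rw [deleteEdges_adj]
            exact ⟨heG, fun hmem => hne (hmem.symm)⟩
          rcases split_reach p hp.edges_nodup ht' with ⟨h1, h2⟩ | ⟨h1, h2⟩
          · exact key2 (((h1.mono hDle).symm.trans huvadj.reachable).trans (h2.mono hDle).symm)
          · exact key2 (((h2.mono hDle).trans huvadj.symm.reachable).trans (h1.mono hDle))
        -- analyze the path
        cases p with
        | nil => exact huv rfl
        | @cons u c v adj rest =>
          cases rest with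
          | nil =>
            exact heT ((mem_edgeSet T).mpr adj)
          | @cons c d v adj2 rest2 =>
            have ht1 : s(u, c) ∈ (Walk.cons adj (Walk.cons adj2 rest2)).edges :=
              List.mem_cons_self
            have ht2 : s(c, d) ∈ (Walk.cons adj (Walk.cons adj2 rest2)).edges := by
              rw [Walk.edges_cons]
              exact List.mem_cons_of_mem _ (List.mem_cons_self)
            have hT1 : s(u, c) ∈ T.edgeSet :=
              (Walk.cons adj (Walk.cons adj2 rest2)).edges_subset_edgeSet ht1
            have hT2 : s(c, d) ∈ T.edgeSet :=
              (Walk.cons adj (Walk.cons adj2 rest2)).edges_subset_edgeSet ht2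
            have hne12 : s(u, c) ≠ s(c, d) := by
              have hnodup := hp.edges_nodup
              rw [Walk.edges_cons, List.nodup_cons] at hnodup
              intro hEq
              exact hnodup.1 (hEq ▸ (List.mem_cons_self : s(c, d) ∈ _))
            by_cases h1i : Γ s(u, c) = Γ s(u, v)
            · have h2i : Γ s(c, d) ≠ Γ s(u, v) := by
                intro h2i
                exact hne12 (hinj hT1 hT2 (h1i.trans h2i.symm))
              exact hkey c d ht2 h2i
            · exact hkey u c ht1 h1i
  · -- tree → md = n - 1
    intro hT
    rw [hmd]
    have hmem : Fintype.card V - 1 ∈ S := by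
      obtain ⟨Γ, hΓinj⟩ := Countable.exists_injective_nat (Sym2 V)
      refine ⟨Γ, ?_, ?_⟩
      · intro u v huv
        obtain ⟨p, hp⟩ := (hT.existsUnique_path u v).exists
        cases p with
        | nil => exact absurd rfl huv
        | @cons u c v adj rest =>
          refine ⟨Γ s(u, c), {s(u, c)}, ?_, ?_, ?_⟩
          · rw [Set.singleton_subset_iff]; exact (mem_edgeSet G).mpr adj
          · rintro e rfl; rfl
          · exact tree_not_reach hT hp (List.mem_cons_self)
      · rw [Set.ncard_image_of_injective _ hΓinj]
        exact tree_edge_ncard hT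
    exact le_antisymm (csSup_le hSne hub) (le_csSup hbdd hmem)
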